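/- Let s : ℕ → ℤ, m ∈ ℕ, d ≥ 1 real, and suppose n' > n ≥ m with s^m_{n'} = ⌊F^{n'−m}(d)⌋ (as in the truncation construction). Then sup_{k ≥ 1} F^{-k}(|s^m_{n+k}|) > d − 1. -/

import Mathlib

private lemma F_ge (t : ℝ) : t ≤ Real.exp t - 1 := by
  have := Real.add_one_le_exp t; linarith

private lemma iter_ge (d : ℝ) (j : ℕ) : d ≤ (fun x : ℝ => Real.exp x - 1)^[j] d := by
  induction j with
  | zero => simp
  | succ j ih =>
    rw [Function.iterate_succ_apply']
    exact ih.trans (F_ge _)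

private lemma G_iter_F_iter (k : ℕ) (x : ℝ) :
    (fun x : ℝ => Real.log (x + 1))^[k] ((fun x : ℝ => Real.exp x - 1)^[k] x) = x := by
  have h : Function.LeftInverse (fun x : ℝ => Real.log (x + 1))
      (fun x : ℝ => Real.exp x - 1) := fun x => by simp [Real.log_exp]
  exact h.iterate k x

private lemma step_lem (x y : ℝ) (hx : 1 ≤ x) (hxy : x - 1 < y) :
    Real.log (x + 1) - 1 < Real.log (y + 1) := by
  have hx0 : 0 < x := by linarith
  have h2 : Real.log x < Real.log (y + 1) := Real.log_lt_log hx0 (by linarith)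
  have h3 : Real.log ((x + 1) / x) ≤ (x + 1) / x - 1 :=
    Real.log_le_sub_one_of_pos (by positivity)
  have h4 : Real.log ((x + 1) / x) = Real.log (x + 1) - Real.log x :=
    Real.log_div (by linarith) (by linarith)
  have h5 : (x + 1) / x - 1 = 1 / x := by field_simp; ring
  have h6 : 1 / x ≤ 1 := by rw [div_le_one hx0]; exact hx
  linarith

private lemma key (k : ℕ) : ∀ x y : ℝ,
    (∀ i ≤ k, 1 ≤ (fun x : ℝ => Real.log (x + 1))^[i] x) →
    x - 1 < y →
    (fun x : ℝ => Real.log (x + 1))^[k] x - 1 < (fun x : ℝ => Real.log (x + 1))^[k] y := by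
  induction k with
  | zero => intro x y _ h; simpa using h
  | succ k ih =>
    intro x y hge hxy
    rw [Function.iterate_succ_apply, Function.iterate_succ_apply]
    have hx : (1 : ℝ) ≤ x := by simpa using hge 0 (by omega)
    apply ih
    · intro i hi
      have := hge (i + 1) (by omega)
      simpa [Function.iterate_succ_apply] using this
    · exact step_lem x y hx hxy

private lemma iter_sub (d : ℝ) (i j : ℕ) (hij : i ≤ j) :
    (fun x : ℝ => Real.log (x + 1))^[i] ((fun x : ℝ => Real.exp x - 1)^[j] d)
      = (fun x : ℝ => Real.exp x - 1)^[j - i] d := by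
  conv_lhs => rw [show j = i + (j - i) by omega, Function.iterate_add_apply]
  exact G_iter_F_iter i _

/-- With the truncated sequence `s^m_n = s_n` for `n ≤ m`,
`s^m_n = min(|s_n|, ⌊F^{n-m}(d)⌋)` for `n > m` (where `F(t) = e^t - 1`),
if `n' > n ≥ m` and `s^m_{n'} = ⌊F^{n'-m}(d)⌋`, then
`sup_{k ≥ 1} F^{-k}(|s^m_{n+k}|) > d - 1`, witnessed by some `k ≥ 1`. -/
theorem truncated_sequence_sup_gt (s : ℕ → ℤ) (m : ℕ) (d : ℝ) (hd : 1 ≤ d)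
    (sm : ℕ → ℤ)
    (hsm : ∀ n, sm n = if n ≤ m then s n
      else min |s n| ⌊(fun x : ℝ => Real.exp x - 1)^[n - m] d⌋)
    (n n' : ℕ) (hmn : m ≤ n) (hnn' : n < n')
    (hval : sm n' = ⌊(fun x : ℝ => Real.exp x - 1)^[n' - m] d⌋) :
    ∃ k ≥ 1, d - 1 < (fun x : ℝ => Real.log (x + 1))^[k] ((|sm (n + k)| : ℤ) : ℝ) := by
  set F := fun x : ℝ => Real.exp x - 1
  set G := fun x : ℝ => Real.log (x + 1)
  refine ⟨n' - n, by omega, ?_⟩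
  have hnk : n + (n' - n) = n' := by omega
  rw [hnk, hval]
  set X : ℝ := F^[n' - m] d with hX
  have hX1 : 1 ≤ X := le_trans hd (iter_ge d _)
  have hfl : (1 : ℤ) ≤ ⌊X⌋ := by exact_mod_cast Int.le_floor.mpr (by exact_mod_cast hX1)
  have habs : |⌊X⌋| = ⌊X⌋ := abs_of_nonneg (by omega)
  rw [habs]
  have hk : n' - n ≤ n' - m := by omega
  have hkey := key (n' - n) X ((⌊X⌋ : ℤ) : ℝ)
    (fun i hi => by
      rw [hX, iter_sub d i (n' - m) (le_trans hi hk)]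
      exact le_trans hd (iter_ge d _))
    (Int.sub_one_lt_floor X)
  have hGk : G^[n' - n] X = F^[(n' - m) - (n' - n)] d := iter_sub d _ _ hk
  have hge : d ≤ G^[n' - n] X := by rw [hGk]; exact iter_ge d _
  calc d - 1 ≤ G^[n' - n] X - 1 := by linarith
    _ < G^[n' - n] ((⌊X⌋ : ℤ) : ℝ) := hkey
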